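/- Let K be a compact subset of (ℝ^d)*. Then there exists a constant M ≥ 0 such that for every c ∈ K and every (x,y) ∈ Ā_c, one has ‖y − x‖ ≤ M. -/

import Mathlib

noncomputable section

/-- Configuration space `ℝ^d` with the Euclidean norm. -/
abbrev Ed (d : ℕ) := EuclideanSpace ℝ (Fin d)

/-- The point of `ℝ^d` with integer coordinates given by `r ∈ ℤ^d`. -/
def intVec (d : ℕ) (r : Fin d → ℤ) : Ed d := WithLp.toLp 2 (fun i => (r i : ℝ))

/-- A generating function: a `C²` map `S : ℝ^d × ℝ^d → ℝ` which is `ℤ^d`-periodic for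
the diagonal action and satisfies the uniform twist condition
`∑_{i,j} ∂²S/∂xᵢ∂yⱼ (x,y) ξᵢ ξⱼ ≤ -A‖ξ‖²` (expressed via the second derivative of `S`
applied to `((ξ,0),(0,ξ))`). -/
def IsGenFn {d : ℕ} (S : Ed d × Ed d → ℝ) : Prop :=
  ContDiff ℝ 2 S ∧
  (∀ (r : Fin d → ℤ) (x y : Ed d), S (x + intVec d r, y + intVec d r) = S (x, y)) ∧
  ∃ A : ℝ, 0 < A ∧ ∀ (x y ξ : Ed d),
    iteratedFDeriv ℝ 2 S (x, y) ![(ξ, 0), (0, ξ)] ≤ -A * ‖ξ‖ ^ 2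

/-- `∂₁S`, the partial differential of `S` with respect to its first variable. -/
def D1 {d : ℕ} (S : Ed d × Ed d → ℝ) (x y : Ed d) : Ed d →L[ℝ] ℝ :=
  fderiv ℝ (fun z => S (z, y)) x

/-- `∂₂S`, the partial differential of `S` with respect to its second variable. -/
def D2 {d : ℕ} (S : Ed d × Ed d → ℝ) (x y : Ed d) : Ed d →L[ℝ] ℝ :=
  fderiv ℝ (fun z => S (x, z)) y

/-- A bi-infinite sequence `(x_n)_{n∈ℤ}` is extremal if
`∂₂S(x_{n-1}, x_n) + ∂₁S(x_n, x_{n+1}) = 0` for every `n`. -/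
def IsExtremal {d : ℕ} (S : Ed d × Ed d → ℝ) (u : ℤ → Ed d) : Prop :=
  ∀ n : ℤ, D2 S (u (n - 1)) (u n) + D1 S (u n) (u (n + 1)) = 0

/-- The action `S(x_0, …, x_n)` of a finite sequence. -/
def act {d : ℕ} (S : Ed d × Ed d → ℝ) (n : ℕ) (γ : ℕ → Ed d) : ℝ :=
  ∑ k ∈ Finset.range n, S (γ k, γ (k + 1))

/-- The sequence `(x, z_1, …, z_{N-1}, y)` built from interior points `z`. -/
def path {d : ℕ} (x y : Ed d) (N : ℕ) (z : Fin (N - 1) → Ed d) : ℕ → Ed d :=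
  fun k => if h0 : k = 0 then x else if h : k < N then z ⟨k - 1, by omega⟩ else y

/-- The fixed-endpoint action `S_{x,y,N} : (x_1, …, x_{N-1}) ↦ S(x, x_1, …, x_{N-1}, y)`. -/
def fixedAct {d : ℕ} (S : Ed d × Ed d → ℝ) (x y : Ed d) (N : ℕ) :
    (Fin (N - 1) → Ed d) → ℝ :=
  fun z => act S N (path x y N z)

/-- `S` has no conjugate points: for all `x, y` and `N ≥ 2`, the fixed-endpoint action
`S_{x,y,N}` has exactly one critical point, and attains its global minimum there. -/
def NoConjPts {d : ℕ} (S : Ed d × Ed d → ℝ) : Prop :=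
  ∀ (x y : Ed d) (N : ℕ), 2 ≤ N →
    ∃ z : Fin (N - 1) → Ed d,
      fderiv ℝ (fixedAct S x y N) z = 0 ∧
      (∀ w, fixedAct S x y N z ≤ fixedAct S x y N w) ∧
      (∀ z', fderiv ℝ (fixedAct S x y N) z' = 0 → z' = z)

/-- `A_N(x,y)`: the minimum of the fixed-endpoint action `S_{x,y,N}` for `N ≥ 2`,
and `S(x,y)` for `N = 1`. -/
def AN {d : ℕ} (S : Ed d × Ed d → ℝ) (N : ℕ) (x y : Ed d) : ℝ :=
  if N ≤ 1 then S (x, y) else sInf (Set.range (fixedAct S x y N))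

/-- The minimizing holonomic value `Σ̃(S)`. -/
def holVal {d : ℕ} (S : Ed d × Ed d → ℝ) : ℝ :=
  sInf { v : ℝ | ∃ n : ℕ, 1 ≤ n ∧ ∃ γ : ℕ → Ed d,
    (∃ r : Fin d → ℤ, γ n - γ 0 = intVec d r) ∧ v = act S n γ / n }

/-- The normalized action `S̃(x_0, …, x_n) = S(x_0, …, x_n) - n Σ̃(S)`. -/
def actTilde {d : ℕ} (S : Ed d × Ed d → ℝ) (n : ℕ) (γ : ℕ → Ed d) : ℝ :=
  act S n γ - n * holVal S

/-- The Mañé potential `π(x,y)`. -/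
def manePot {d : ℕ} (S : Ed d × Ed d → ℝ) (x y : Ed d) : ℝ :=
  sInf { v : ℝ | ∃ n : ℕ, 1 ≤ n ∧ ∃ γ : ℕ → Ed d,
    γ 0 = x ∧ (∃ r : Fin d → ℤ, γ n - y = intVec d r) ∧ v = actTilde S n γ }

/-- The Aubry set `Ā(S) ⊂ ℝ^d × ℝ^d`. -/
def aubry {d : ℕ} (S : Ed d × Ed d → ℝ) : Set (Ed d × Ed d) :=
  { p | ∀ ε > 0, ∃ n : ℕ, 1 ≤ n ∧ ∃ γ : ℕ → Ed d,
      (∃ r : Fin d → ℤ, γ n - γ 0 = intVec d r) ∧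
      ‖p.1 - γ 0‖ < ε ∧ ‖p.2 - γ 1‖ < ε ∧ actTilde S n γ < ε }

/-- The generating function `S_c(x,y) = S(x,y) + c(x - y)` associated to a cohomology
class `c ∈ (ℝ^d)*`. -/
def Sc {d : ℕ} (S : Ed d × Ed d → ℝ) (c : Ed d →L[ℝ] ℝ) : Ed d × Ed d → ℝ :=
  fun p => S p + c (p.1 - p.2)


/-! ### Auxiliary lemmas for `stmt_16` -/

section Aux

lemma aux_norm_le (d : ℕ) (v : Ed d) (h : ∀ i, |v i| ≤ 1) : ‖v‖ ≤ Real.sqrt d := by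
  rw [EuclideanSpace.norm_eq]
  apply Real.sqrt_le_sqrt
  calc ∑ i, ‖v i‖ ^ 2 ≤ ∑ _i : Fin d, (1:ℝ) := by
        refine Finset.sum_le_sum fun i _ => ?_
        have := h i
        rw [Real.norm_eq_abs]
        nlinarith [abs_nonneg (v i)]
    _ = d := by simp

lemma aux_round (d : ℕ) (w : Ed d) : ∃ r : Fin d → ℤ, ‖w - intVec d r‖ ≤ Real.sqrt d := by
  refine ⟨fun i => round (w i), aux_norm_le _ _ fun i => ?_⟩
  have h1 : (w - intVec d (fun i => round (w i))) i = w i - (round (w i) : ℝ) := by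
    rw [PiLp.sub_apply]; rfl
  rw [h1]
  exact (abs_sub_round (w i)).trans (by norm_num)

lemma intVec_sub (d : ℕ) (r s : Fin d → ℤ) :
    intVec d (r - s) = intVec d r - intVec d s := by
  ext i
  show ((r i - s i : ℤ) : ℝ) = (r i : ℝ) - s i
  push_cast; ring

/-- A continuous diagonally periodic function is bounded on strips `‖y - x‖ ≤ ρ`. -/
lemma strip_bound {d : ℕ} (f : Ed d × Ed d → ℝ) (hf : Continuous f)
    (hper : ∀ (r : Fin d → ℤ) (x y : Ed d), f (x + intVec d r, y + intVec d r) = f (x, y))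
    (ρ : ℝ) :
    ∃ C : ℝ, 0 ≤ C ∧ ∀ x y : Ed d, ‖y - x‖ ≤ ρ → |f (x, y)| ≤ C := by
  set Q : Set (Ed d × Ed d) :=
    (Metric.closedBall 0 (Real.sqrt d)) ×ˢ (Metric.closedBall 0 (Real.sqrt d + ρ)) with hQ
  have hQc : IsCompact Q :=
    (isCompact_closedBall _ _).prod (isCompact_closedBall _ _)
  obtain ⟨C, hC⟩ := hQc.exists_bound_of_continuousOn hf.continuousOn
  refine ⟨max C 0, le_max_right _ _, fun x y hxy => ?_⟩
  obtain ⟨r, hr⟩ := aux_round d x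
  have hx' : ‖x - intVec d r‖ ≤ Real.sqrt d := hr
  have hy' : ‖y - intVec d r‖ ≤ Real.sqrt d + ρ := by
    have : y - intVec d r = (y - x) + (x - intVec d r) := by abel
    rw [this]
    calc ‖(y - x) + (x - intVec d r)‖ ≤ ‖y - x‖ + ‖x - intVec d r‖ := norm_add_le _ _
      _ ≤ ρ + Real.sqrt d := add_le_add hxy hx'
      _ = Real.sqrt d + ρ := by ring
  have hmem : ((x - intVec d r, y - intVec d r) : Ed d × Ed d) ∈ Q := by
    constructor <;> simpa [Q] using ‹_›
  have hb := hC _ hmem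
  have heq : f (x - intVec d r, y - intVec d r) = f (x, y) := by
    have := hper r (x - intVec d r) (y - intVec d r)
    simpa using this.symm
  rw [heq] at hb
  exact le_trans (by simpa using hb) (le_max_left _ _)

lemma fderiv_per {d : ℕ} (S : Ed d × Ed d → ℝ) (hS : Differentiable ℝ S)
    (hper : ∀ (r : Fin d → ℤ) (x y : Ed d), S (x + intVec d r, y + intVec d r) = S (x, y))
    (r : Fin d → ℤ) (x y : Ed d) :
    fderiv ℝ S (x + intVec d r, y + intVec d r) = fderiv ℝ S (x, y) := by
  set e : Ed d × Ed d := (intVec d r, intVec d r) with he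
  have hfun : (fun p : Ed d × Ed d => S (p + e)) = S := by
    funext p
    exact hper r p.1 p.2
  have h1 : HasFDerivAt (fun p : Ed d × Ed d => S (p + e))
      (fderiv ℝ S ((x, y) + e)) (x, y) := by
    have hline : HasFDerivAt (fun p : Ed d × Ed d => p + e)
        (ContinuousLinearMap.id ℝ (Ed d × Ed d)) (x, y) := (hasFDerivAt_id _).add_const e
    have := ((hS ((x, y) + e)).hasFDerivAt).comp (x, y) hline
    rw [ContinuousLinearMap.comp_id] at this
    exact this
  have h2 : HasFDerivAt S (fderiv ℝ S ((x, y) + e)) (x, y) := by rwa [hfun] at h1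
  have h3 := h2.fderiv
  have h4 : ((x, y) + e) = (x + intVec d r, y + intVec d r) := rfl
  rw [h4] at h3
  exact h3.symm

set_option maxHeartbeats 1000000 in
open intervalIntegral in
/-- Quadratic lower bound for a generating function, coming from the twist condition. -/
lemma quad_lb {d : ℕ} (S : Ed d × Ed d → ℝ) (hC2 : ContDiff ℝ 2 S)
    (A C C0 : ℝ) (hA : 0 < A)
    (htwist : ∀ x y ξ : Ed d, iteratedFDeriv ℝ 2 S (x, y) ![(ξ, 0), (0, ξ)] ≤ -A * ‖ξ‖ ^ 2)
    (hC : ∀ z : Ed d, ‖fderiv ℝ S (z, z)‖ ≤ C)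
    (hC0 : ∀ z : Ed d, -C0 ≤ S (z, z)) :
    ∀ x y : Ed d, A / 2 * ‖y - x‖ ^ 2 - C * ‖y - x‖ - C0 ≤ S (x, y) := by
  intro x y
  set ξ : Ed d := y - x with hξ
  have hxy : x + ξ = y := by rw [hξ]; abel
  have Sdiff : Differentiable ℝ S := hC2.differentiable (by norm_num)
  set F1 : Ed d × Ed d → Ed d × Ed d →L[ℝ] ℝ := fderiv ℝ S with hF1def
  have hF1 : ContDiff ℝ 1 F1 := hC2.fderiv_right (by norm_num)
  have F1diff : Differentiable ℝ F1 := hF1.differentiable one_ne_zero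
  have F1cont : Continuous F1 := hF1.continuous
  have hline : ∀ (a : Ed d) (t : ℝ), HasDerivAt (fun t : ℝ => a + t • ξ) ξ t := by
    intro a t
    simpa using ((hasDerivAt_id t).smul_const ξ).const_add a
  have htwist' : ∀ p : Ed d × Ed d, fderiv ℝ F1 p (ξ, 0) (0, ξ) ≤ -A * ‖ξ‖ ^ 2 := by
    intro p
    have h := htwist p.1 p.2 ξ
    rw [iteratedFDeriv_two_apply] at h
    simpa [hF1def] using h
  have hu : ∀ (b : Ed d) (t : ℝ), HasDerivAt (fun t : ℝ => F1 (x + t • ξ, b) (0, ξ))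
      (fderiv ℝ F1 (x + t • ξ, b) (ξ, 0) (0, ξ)) t := by
    intro b t
    have hγ : HasDerivAt (fun t : ℝ => ((x + t • ξ : Ed d), b)) ((ξ, 0) : Ed d × Ed d) t :=
      (hline x t).prodMk (hasDerivAt_const t b)
    have hc : HasDerivAt (fun t : ℝ => F1 (x + t • ξ, b))
        (fderiv ℝ F1 (x + t • ξ, b) ((ξ, 0) : Ed d × Ed d)) t :=
      (F1diff _).hasFDerivAt.comp_hasDerivAt t hγ
    simpa using hc.clm_apply (hasDerivAt_const t ((0 : Ed d), ξ))
  have keyB : ∀ s : ℝ, 0 ≤ s →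
      F1 (x + s • ξ, x + s • ξ) (0, ξ) + A * ‖ξ‖ ^ 2 * s ≤ F1 (x, x + s • ξ) (0, ξ) := by
    intro s hs
    set b : Ed d := x + s • ξ with hb
    set w : ℝ → ℝ := fun t => F1 (x + t • ξ, b) (0, ξ) + A * ‖ξ‖ ^ 2 * t with hw
    have hwD : ∀ t, HasDerivAt w
        (fderiv ℝ F1 (x + t • ξ, b) (ξ, 0) (0, ξ) + A * ‖ξ‖ ^ 2) t := by
      intro t
      exact (hu b t).add (by simpa using (hasDerivAt_id t).const_mul (A * ‖ξ‖ ^ 2))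
    have hanti : Antitone w := by
      apply antitone_of_deriv_nonpos (fun t => (hwD t).differentiableAt)
      intro t
      rw [(hwD t).deriv]
      have := htwist' (x + t • ξ, b)
      linarith
    have hle := hanti hs
    have h0 : w 0 = F1 (x, b) (0, ξ) := by simp [hw]
    have h1 : w s = F1 (b, b) (0, ξ) + A * ‖ξ‖ ^ 2 * s := rfl
    rw [h0] at hle
    rw [h1] at hle
    exact hle
  have hcurve2 : ∀ s : ℝ, HasDerivAt (fun s : ℝ => ((x : Ed d), x + s • ξ))
      ((0, ξ) : Ed d × Ed d) s := fun s => (hasDerivAt_const s x).prodMk (hline x s)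
  have hq : ∀ s ∈ Set.uIcc (0:ℝ) 1, HasDerivAt (fun s : ℝ => S (x, x + s • ξ))
      (F1 (x, x + s • ξ) (0, ξ)) s := fun s _ =>
    (Sdiff _).hasFDerivAt.comp_hasDerivAt s (hcurve2 s)
  have hcurve2c : Continuous fun s : ℝ => ((x : Ed d), x + s • ξ) := by fun_prop
  have hcontg1 : Continuous fun s : ℝ => F1 (x, x + s • ξ) (0, ξ) :=
    (ContinuousLinearMap.apply ℝ ℝ ((0 : Ed d), ξ)).continuous.comp (F1cont.comp hcurve2c)
  have hFTCq : ∫ s in (0:ℝ)..1, F1 (x, x + s • ξ) (0, ξ) = S (x, y) - S (x, x) := by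
    rw [intervalIntegral.integral_eq_sub_of_hasDerivAt hq (hcontg1.intervalIntegrable 0 1)]
    simp [hxy]
  have hcurved : ∀ s : ℝ, HasDerivAt (fun s : ℝ => ((x + s • ξ : Ed d), x + s • ξ))
      ((ξ, ξ) : Ed d × Ed d) s := fun s => (hline x s).prodMk (hline x s)
  have hψ : ∀ s ∈ Set.uIcc (0:ℝ) 1, HasDerivAt (fun s : ℝ => S (x + s • ξ, x + s • ξ))
      (F1 (x + s • ξ, x + s • ξ) (ξ, ξ)) s := fun s _ =>
    (Sdiff _).hasFDerivAt.comp_hasDerivAt s (hcurved s)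
  have hcurvedc : Continuous fun s : ℝ => ((x + s • ξ : Ed d), x + s • ξ) := by fun_prop
  have hcontψ : Continuous fun s : ℝ => F1 (x + s • ξ, x + s • ξ) (ξ, ξ) :=
    (ContinuousLinearMap.apply ℝ ℝ ((ξ : Ed d), ξ)).continuous.comp (F1cont.comp hcurvedc)
  have hFTCψ : ∫ s in (0:ℝ)..1, F1 (x + s • ξ, x + s • ξ) (ξ, ξ) = S (y, y) - S (x, x) := by
    rw [intervalIntegral.integral_eq_sub_of_hasDerivAt hψ (hcontψ.intervalIntegrable 0 1)]
    simp [hxy]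
  have hsplit : ∀ p : Ed d × Ed d, F1 p ((ξ, ξ) : Ed d × Ed d)
      = F1 p (ξ, 0) + F1 p (0, ξ) := by
    intro p
    rw [← map_add]
    congr 1
    simp [Prod.ext_iff]
  set g1 : ℝ → ℝ := fun s => F1 (x, x + s • ξ) (0, ξ) with hg1
  set g2a : ℝ → ℝ := fun s => F1 (x + s • ξ, x + s • ξ) (0, ξ) with hg2a
  set g3 : ℝ → ℝ := fun s => F1 (x + s • ξ, x + s • ξ) (ξ, 0) with hg3
  have hcontg2a : Continuous g2a :=
    (ContinuousLinearMap.apply ℝ ℝ ((0 : Ed d), ξ)).continuous.comp (F1cont.comp hcurvedc)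
  have hcontg3 : Continuous g3 :=
    (ContinuousLinearMap.apply ℝ ℝ ((ξ : Ed d), (0 : Ed d))).continuous.comp
      (F1cont.comp hcurvedc)
  have hint1 : IntervalIntegrable g1 MeasureTheory.volume 0 1 := hcontg1.intervalIntegrable 0 1
  have hint2a : IntervalIntegrable g2a MeasureTheory.volume 0 1 :=
    hcontg2a.intervalIntegrable 0 1
  have hint3 : IntervalIntegrable g3 MeasureTheory.volume 0 1 := hcontg3.intervalIntegrable 0 1
  have hint2b : IntervalIntegrable (fun s : ℝ => A * ‖ξ‖ ^ 2 * s) MeasureTheory.volume 0 1 :=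
    (by fun_prop : Continuous fun s : ℝ => A * ‖ξ‖ ^ 2 * s).intervalIntegrable 0 1
  have hmono : (∫ s in (0:ℝ)..1, (g2a s + A * ‖ξ‖ ^ 2 * s)) ≤ ∫ s in (0:ℝ)..1, g1 s := by
    apply intervalIntegral.integral_mono_on zero_le_one (hint2a.add hint2b) hint1
    intro s hs
    exact keyB s hs.1
  have hsum2 : (∫ s in (0:ℝ)..1, (g2a s + A * ‖ξ‖ ^ 2 * s))
      = (∫ s in (0:ℝ)..1, g2a s) + A * ‖ξ‖ ^ 2 / 2 := by
    rw [intervalIntegral.integral_add hint2a hint2b, intervalIntegral.integral_const_mul,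
      integral_id]
    ring
  have hsumψ : (∫ s in (0:ℝ)..1, g3 s) + (∫ s in (0:ℝ)..1, g2a s) = S (y, y) - S (x, x) := by
    rw [← intervalIntegral.integral_add hint3 hint2a, ← hFTCψ]
    apply intervalIntegral.integral_congr
    intro s _
    exact (hsplit _).symm
  have hg3bd : (∫ s in (0:ℝ)..1, g3 s) ≤ C * ‖ξ‖ := by
    have hle : (∫ s in (0:ℝ)..1, g3 s) ≤ ∫ _s in (0:ℝ)..1, C * ‖ξ‖ := by
      apply intervalIntegral.integral_mono_on zero_le_one hint3 intervalIntegrable_const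
      intro s _
      have h1 : |g3 s| ≤ ‖F1 (x + s • ξ, x + s • ξ)‖ * ‖((ξ : Ed d), (0 : Ed d))‖ := by
        simpa [Real.norm_eq_abs] using
          (F1 (x + s • ξ, x + s • ξ)).le_opNorm (((ξ : Ed d), (0 : Ed d)))
      have h2 : ‖((ξ : Ed d), (0 : Ed d))‖ = ‖ξ‖ := by
        simp [Prod.norm_def]
      rw [h2] at h1
      calc g3 s ≤ |g3 s| := le_abs_self _
        _ ≤ ‖F1 (x + s • ξ, x + s • ξ)‖ * ‖ξ‖ := h1
        _ ≤ C * ‖ξ‖ := mul_le_mul_of_nonneg_right (hC _) (norm_nonneg _)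
    simpa using hle
  have hSyy := hC0 y
  have hnorm : ‖ξ‖ = ‖y - x‖ := by rw [hξ]
  nlinarith [hmono, hsum2, hsumψ, hg3bd, hFTCq]

end Aux


set_option maxHeartbeats 1000000 in
/-- Let `K` be a compact subset of `(ℝ^d)*`. There exists a constant `M ≥ 0` such that
for every `c ∈ K` and every `(x,y) ∈ Ā_c`, one has `‖y - x‖ ≤ M`. -/
theorem stmt_16 (d : ℕ) (hd : 1 ≤ d) (S : Ed d × Ed d → ℝ) (hS : IsGenFn S)
    (K : Set (Ed d →L[ℝ] ℝ)) (hK : IsCompact K) :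
    ∃ M : ℝ, 0 ≤ M ∧ ∀ c ∈ K, ∀ p ∈ aubry (Sc S c), ‖p.2 - p.1‖ ≤ M := by
  obtain ⟨hC2, hper, A, hA, htwist⟩ := hS
  -- a bound on the norms of elements of `K`
  obtain ⟨R0, hR0⟩ := hK.exists_bound_of_continuousOn continuousOn_id
  set R : ℝ := max R0 0 with hRdef
  have hR : ∀ c ∈ K, ‖c‖ ≤ R := fun c hc =>
    le_trans (by simpa using hR0 c hc) (le_max_left _ _)
  have hRnn : 0 ≤ R := le_max_right _ _
  -- constants coming from periodicity and compactness
  have hF1c : ContDiff ℝ 1 (fderiv ℝ S) := hC2.fderiv_right (by norm_num)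
  have hF1cont : Continuous fun p : Ed d × Ed d => ‖fderiv ℝ S p‖ := hF1c.continuous.norm
  have hSdiff : Differentiable ℝ S := hC2.differentiable (by norm_num)
  have hperF : ∀ (r : Fin d → ℤ) (x y : Ed d),
      ‖fderiv ℝ S (x + intVec d r, y + intVec d r)‖ = ‖fderiv ℝ S (x, y)‖ := by
    intro r x y
    rw [fderiv_per S hSdiff hper]
  obtain ⟨C, hCnn, hCb⟩ := strip_bound (fun p => ‖fderiv ℝ S p‖) hF1cont hperF 0
  have hCd : ∀ z : Ed d, ‖fderiv ℝ S (z, z)‖ ≤ C := fun z =>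
    le_of_abs_le (hCb z z (by simp))
  obtain ⟨C1, hC1nn, hC1b⟩ := strip_bound S hC2.continuous hper (Real.sqrt d)
  have hC0 : ∀ z : Ed d, -C1 ≤ S (z, z) := fun z =>
    (abs_le.mp (hC1b z z (by simp [Real.sqrt_nonneg]))).1
  have quad := quad_lb S hC2 A C C1 hA htwist hCd hC0
  -- global constants
  set L : ℝ := C + R with hLdef
  have hLnn : 0 ≤ L := by positivity
  set C4 : ℝ := C1 + R * Real.sqrt d with hC4def
  have hC4nn : 0 ≤ C4 := by positivity
  set M : ℝ := 2 * (L + (1 + C4 + C1)) / A + 1 with hMdef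
  have hMaux : 0 ≤ 2 * (L + (1 + C4 + C1)) / A := by positivity
  have hM0 : 0 ≤ M := by rw [hMdef]; linarith
  refine ⟨M, hM0, ?_⟩
  intro c hc p hp
  set T : Ed d × Ed d → ℝ := Sc S c with hTset
  have hcR : ‖c‖ ≤ R := hR c hc
  have hTdef : ∀ u v : Ed d, T (u, v) = S (u, v) + c (u - v) := fun u v => rfl
  -- lower quadratic bound for T
  have hTlow : ∀ u v : Ed d, A / 2 * ‖v - u‖ ^ 2 - L * ‖v - u‖ - C1 ≤ T (u, v) := by
    intro u v
    have h1 := quad u v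
    have h2 : |c (u - v)| ≤ R * ‖v - u‖ := by
      calc |c (u - v)| ≤ ‖c‖ * ‖u - v‖ := c.le_opNorm _
        _ = ‖c‖ * ‖v - u‖ := by rw [norm_sub_rev]
        _ ≤ R * ‖v - u‖ := mul_le_mul_of_nonneg_right hcR (norm_nonneg _)
    have h3 := (abs_le.mp h2).1
    rw [hTdef]
    rw [hLdef]
    nlinarith [h1, h3]
  -- uniform step lower bound
  set m : ℝ := L ^ 2 / (2 * A) + C1 with hmdef
  have hTstep : ∀ u v : Ed d, -m ≤ T (u, v) := by
    intro u v
    have ht := hTlow u v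
    set t : ℝ := ‖v - u‖
    have h2A : (0:ℝ) < 2 * A := by linarith
    have key : -(L ^ 2 / (2 * A)) ≤ A / 2 * t ^ 2 - L * t := by
      rw [neg_le, ← sub_nonneg]
      have hnn : 0 ≤ (A * t - L) ^ 2 / (2 * A) := by positivity
      have heq : L ^ 2 / (2 * A) - -(A / 2 * t ^ 2 - L * t) = (A * t - L) ^ 2 / (2 * A) := by
        field_simp
        ring
      rw [heq]
      exact hnn
    rw [hmdef]
    linarith
  -- the holonomic value is a true infimum
  set Hset : Set ℝ := { v : ℝ | ∃ n : ℕ, 1 ≤ n ∧ ∃ γ : ℕ → Ed d,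
    (∃ r : Fin d → ℤ, γ n - γ 0 = intVec d r) ∧ v = act T n γ / n } with hHset
  have hbdd : BddBelow Hset := by
    refine ⟨-m, fun v hv => ?_⟩
    obtain ⟨n, hn, γ, _, rfl⟩ := hv
    have hnpos : (0:ℝ) < n := by exact_mod_cast hn
    rw [le_div_iff₀ hnpos]
    have hsum : (-m) * n ≤ act T n γ := by
      have : ∀ k ∈ Finset.range n, -m ≤ T (γ k, γ (k + 1)) := fun k _ => hTstep _ _
      calc (-m) * n = ∑ _k ∈ Finset.range n, (-m) := by
            simp [Finset.sum_const, mul_comm]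
        _ ≤ act T n γ := Finset.sum_le_sum this
    exact hsum
  have hHeq : holVal T = sInf Hset := rfl
  have hclosed : ∀ (n : ℕ), 1 ≤ n → ∀ γ : ℕ → Ed d,
      (∃ r : Fin d → ℤ, γ n - γ 0 = intVec d r) → (n : ℝ) * holVal T ≤ act T n γ := by
    intro n hn γ hcl
    have hmem : act T n γ / n ∈ Hset := ⟨n, hn, γ, hcl, rfl⟩
    have hle : holVal T ≤ act T n γ / n := by
      rw [hHeq]; exact csInf_le hbdd hmem
    have hnpos : (0:ℝ) < n := by exact_mod_cast hn
    have := (le_div_iff₀ hnpos).mp hle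
    linarith [this]
  -- upper bound on bounded jumps
  have hTup : ∀ u v : Ed d, ‖v - u‖ ≤ Real.sqrt d → T (u, v) ≤ C4 := by
    intro u v h
    have h1 := (abs_le.mp (hC1b u v h)).2
    have h2 : |c (u - v)| ≤ R * Real.sqrt d := by
      calc |c (u - v)| ≤ ‖c‖ * ‖u - v‖ := c.le_opNorm _
        _ = ‖c‖ * ‖v - u‖ := by rw [norm_sub_rev]
        _ ≤ R * Real.sqrt d := mul_le_mul hcR h (norm_nonneg _) hRnn
    have h3 := (abs_le.mp h2).2
    rw [hTdef, hC4def]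
    linarith
  -- main estimate
  have main : ∀ ε : ℝ, 0 < ε → ε ≤ 1 → ‖p.2 - p.1‖ ≤ M + 2 * ε := by
    intro ε hε hε1
    obtain ⟨n, hn, γ, ⟨r, hγr⟩, hx1, hy1, hact⟩ := hp ε hε
    obtain ⟨n', rfl⟩ : ∃ n', n = n' + 1 := ⟨n - 1, by omega⟩
    obtain ⟨ρ, hρ⟩ := aux_round d (γ 1 - γ 0)
    set s : Fin d → ℤ := r - ρ with hsdef
    have hγn : γ (n' + 1) = intVec d r + γ 0 := sub_eq_iff_eq_add.mp hγr
    have hjump : ‖(γ 1 + intVec d s) - γ (n' + 1)‖ ≤ Real.sqrt d := by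
      have heq : (γ 1 + intVec d s) - γ (n' + 1) = (γ 1 - γ 0) - intVec d ρ := by
        rw [hγn, hsdef, intVec_sub]
        abel
      rw [heq]
      exact hρ
    set δ : ℕ → Ed d := fun k => if k < n' + 1 then γ (k + 1) else γ 1 + intVec d s with hδ
    have e0 : δ 0 = γ 1 := if_pos (Nat.succ_pos n')
    have eN : δ (n' + 1) = γ 1 + intVec d s := if_neg (lt_irrefl _)
    have hδcl : δ (n' + 1) - δ 0 = intVec d s := by
      rw [e0, eN]; exact add_sub_cancel_left _ _
    have hA1 : act T (n' + 1) δ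
        = (∑ k ∈ Finset.range n', T (γ (k + 1), γ (k + 2))) + T (γ (n' + 1), γ 1 + intVec d s) := by
      rw [act, Finset.sum_range_succ]
      congr 1
      · apply Finset.sum_congr rfl
        intro k hk
        have hk' : k < n' := Finset.mem_range.mp hk
        have e1 : δ k = γ (k + 1) := if_pos (by omega)
        have e2 : δ (k + 1) = γ (k + 2) := if_pos (by omega)
        rw [e1, e2]
      · have e1 : δ n' = γ (n' + 1) := if_pos (by omega)
        rw [e1, eN]
    have hA2 : act T (n' + 1) γ
        = (∑ k ∈ Finset.range n', T (γ (k + 1), γ (k + 2))) + T (γ 0, γ 1) := by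
      rw [act, Finset.sum_range_succ' (fun k => T (γ k, γ (k + 1))) n']
    have h0le : 0 ≤ actTilde T (n' + 1) δ := by
      have := hclosed (n' + 1) (by omega) δ ⟨s, hδcl⟩
      rw [actTilde]
      linarith
    have hT01 : T (γ 0, γ 1) ≤ ε + C4 := by
      have hδT : actTilde T (n' + 1) δ
          = actTilde T (n' + 1) γ - T (γ 0, γ 1) + T (γ (n' + 1), γ 1 + intVec d s) := by
        rw [actTilde, actTilde, hA1, hA2]
        ring
      have h2 := hTup (γ (n' + 1)) (γ 1 + intVec d s) hjump
      rw [hδT] at h0le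
      linarith
    set t : ℝ := ‖γ 1 - γ 0‖ with htdef
    have hqd := hTlow (γ 0) (γ 1)
    have htnn : 0 ≤ t := norm_nonneg _
    have htM : t ≤ M := by
      by_cases hcase : t ≤ 1
      · rw [hMdef]; linarith
      · push_neg at hcase
        have hineq : A / 2 * t ^ 2 ≤ L * t + (1 + C4 + C1) := by linarith
        have hineq2 : A / 2 * t ≤ L + (1 + C4 + C1) := by
          nlinarith
        rw [hMdef]
        rw [div_add' _ _ _ (ne_of_gt hA), le_div_iff₀ hA] at *
        nlinarith
    have htri : ‖p.2 - p.1‖ ≤ ‖p.2 - γ 1‖ + ‖γ 1 - γ 0‖ + ‖γ 0 - p.1‖ := by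
      have heq : p.2 - p.1 = (p.2 - γ 1) + (γ 1 - γ 0) + (γ 0 - p.1) := by abel
      rw [heq]
      exact norm_add₃_le
    have hx1' : ‖γ 0 - p.1‖ < ε := by rw [norm_sub_rev]; exact hx1
    linarith
  -- conclude
  have hfin : ∀ η : ℝ, 0 < η → ‖p.2 - p.1‖ ≤ M + η := by
    intro η hη
    rcases le_or_gt η 2 with h | h
    · exact le_trans (main (η / 2) (by linarith) (by linarith)) (by linarith)
    · exact le_trans (main 1 one_pos le_rfl) (by linarith)
  exact le_of_forall_pos_le_add hfin


end
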